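/- For arbitrary positive definite real matrices A, B, C of the same size, det(A + B + C) · det(A) ≤ det(A + B) · det(A + C). -/

import Mathlib

open Matrix
open scoped MatrixOrder

/-- For a real positive semidefinite matrix `Y`, `1 ≤ det (1 + Y)`. -/
private lemma one_le_det_one_add {n : ℕ} {Y : Matrix (Fin n) (Fin n) ℝ}
    (hY : Y.PosSemidef) : 1 ≤ (1 + Y).det := by
  have hH : Y.IsHermitian := hY.isHermitian
  set U : Matrix (Fin n) (Fin n) ℝ := (hH.eigenvectorUnitary : Matrix (Fin n) (Fin n) ℝ) with hUdef
  set D : Matrix (Fin n) (Fin n) ℝ := diagonal (RCLike.ofReal ∘ hH.eigenvalues) with hDdef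
  have hU : U * star U = 1 := Matrix.mem_unitaryGroup_iff.mp hH.eigenvectorUnitary.2
  have hspec : Y = U * D * star U := hH.spectral_theorem
  have h1 : (1 : Matrix (Fin n) (Fin n) ℝ) + Y = U * (1 + D) * star U := by
    have : U * (1 + D) * star U = U * star U + U * D * star U := by noncomm_ring
    rw [this, hU, ← hspec]
  have hdet1 : (1 + Y).det = (1 + D).det := by
    rw [h1, det_mul, det_mul]
    have : U.det * (star U).det = 1 := by rw [← det_mul, hU, det_one]
    calc U.det * (1 + D).det * (star U).det
        = (U.det * (star U).det) * (1 + D).det := by ring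
      _ = (1 + D).det := by rw [this, one_mul]
  rw [hdet1, hDdef]
  have : (1 : Matrix (Fin n) (Fin n) ℝ) + diagonal (RCLike.ofReal ∘ hH.eigenvalues)
      = diagonal (fun i => 1 + hH.eigenvalues i) := by
    rw [← diagonal_one, diagonal_add]
    rfl
  rw [this, det_diagonal]
  calc (1 : ℝ) = ∏ _i : Fin n, (1 : ℝ) := by simp
    _ ≤ ∏ i : Fin n, (1 + hH.eigenvalues i) :=
        Finset.prod_le_prod (fun i _ => zero_le_one)
          (fun i _ => by linarith [hY.eigenvalues_nonneg i])

/-- Monotonicity: `det P ≤ det (P + X)` for `P` positive definite and `X` PSD. -/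
private lemma det_le_det_add {n : ℕ} {P X : Matrix (Fin n) (Fin n) ℝ}
    (hP : P.PosDef) (hX : X.PosSemidef) : P.det ≤ (P + X).det := by
  set S := CFC.sqrt P with hSdef
  have hSps : S.PosSemidef := Matrix.nonneg_iff_posSemidef.mp (CFC.sqrt_nonneg _)
  have hSS : S * S = P := CFC.sqrt_mul_sqrt_self _ hP.posSemidef.nonneg
  have hdetS : S.det * S.det = P.det := by rw [← det_mul, hSS]
  have hSu : IsUnit S.det := by
    refine isUnit_iff_ne_zero.mpr fun h => ?_
    have := hP.det_pos
    rw [← hdetS, h, mul_zero] at this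
    exact lt_irrefl _ this
  have hid1 : S * S⁻¹ = 1 := mul_nonsing_inv _ hSu
  have hid2 : S⁻¹ * S = 1 := nonsing_inv_mul _ hSu
  have hSinvH : (S⁻¹)ᴴ = S⁻¹ := by
    rw [conjTranspose_nonsing_inv, hSps.isHermitian]
  have hY : (S⁻¹ * X * S⁻¹).PosSemidef := by
    have := hX.conjTranspose_mul_mul_same S⁻¹
    rwa [hSinvH] at this
  have hconj : P + X = S * (1 + S⁻¹ * X * S⁻¹) * S := by
    have h : S * (1 + S⁻¹ * X * S⁻¹) * S
        = S * S + (S * S⁻¹) * X * (S⁻¹ * S) := by noncomm_ring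
    rw [h, hid1, hid2, hSS, one_mul, mul_one]
  have hdet : (P + X).det = P.det * (1 + S⁻¹ * X * S⁻¹).det := by
    rw [hconj, det_mul, det_mul, ← hdetS]; ring
  rw [hdet]
  nlinarith [one_le_det_one_add hY, hP.det_pos]

/-- Key inequality: `det (1 + B + C) ≤ det (1 + B) * det (1 + C)` for PSD `B, C`. -/
private lemma det_one_add_add_le {n : ℕ} {B C : Matrix (Fin n) (Fin n) ℝ}
    (hB : B.PosSemidef) (hC : C.PosSemidef) :
    (1 + B + C).det ≤ (1 + B).det * (1 + C).det := by
  have h1B : (1 + B).PosDef := Matrix.PosDef.add_posSemidef Matrix.PosDef.one hB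
  set T := CFC.sqrt (1 + B) with hTdef
  have hTps : T.PosSemidef := Matrix.nonneg_iff_posSemidef.mp (CFC.sqrt_nonneg _)
  have hTT : T * T = 1 + B := CFC.sqrt_mul_sqrt_self _ h1B.posSemidef.nonneg
  have hdetT : T.det * T.det = (1 + B).det := by rw [← det_mul, hTT]
  have hTu : IsUnit T.det := by
    refine isUnit_iff_ne_zero.mpr fun h => ?_
    have := h1B.det_pos
    rw [← hdetT, h, mul_zero] at this
    exact lt_irrefl _ this
  have hid1 : T * T⁻¹ = 1 := mul_nonsing_inv _ hTu
  have hid2 : T⁻¹ * T = 1 := nonsing_inv_mul _ hTu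
  have hTinvH : (T⁻¹)ᴴ = T⁻¹ := by
    rw [conjTranspose_nonsing_inv, hTps.isHermitian]
  -- 1 + B + C = T * (1 + T⁻¹ C T⁻¹) * T
  have hconj : 1 + B + C = T * (1 + T⁻¹ * C * T⁻¹) * T := by
    have h : T * (1 + T⁻¹ * C * T⁻¹) * T
        = T * T + (T * T⁻¹) * C * (T⁻¹ * T) := by noncomm_ring
    rw [h, hid1, hid2, hTT, one_mul, mul_one]
  have hdet : (1 + B + C).det = (1 + B).det * (1 + T⁻¹ * C * T⁻¹).det := by
    rw [hconj, det_mul, det_mul, ← hdetT]; ring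
  rw [hdet]
  -- it remains to show det (1 + T⁻¹ C T⁻¹) ≤ det (1 + C)
  have hmain : (1 + T⁻¹ * C * T⁻¹).det ≤ (1 + C).det := by
    set K := CFC.sqrt C with hKdef
    have hKps : K.PosSemidef := Matrix.nonneg_iff_posSemidef.mp (CFC.sqrt_nonneg _)
    have hKK : K * K = C := CFC.sqrt_mul_sqrt_self _ hC.nonneg
    -- det(1 + T⁻¹ (K K) T⁻¹) = det(1 + (K T⁻¹)(T⁻¹ K)) = det(1 + K T⁻¹ T⁻¹ K)
    have hcomm : (1 + T⁻¹ * C * T⁻¹).det = (1 + K * (T⁻¹ * T⁻¹) * K).det := by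
      have e1 : T⁻¹ * C * T⁻¹ = (T⁻¹ * K) * (K * T⁻¹) := by
        rw [← hKK]; noncomm_ring
      have e2 : (K * T⁻¹) * (T⁻¹ * K) = K * (T⁻¹ * T⁻¹) * K := by noncomm_ring
      rw [e1, det_one_add_mul_comm, e2]
    rw [hcomm]
    -- 1 + C = (1 + K T⁻² K) + K (T⁻¹ B T⁻¹) K, second summand PSD
    have hTiTi : (T⁻¹ * T⁻¹).PosSemidef := by
      have := (Matrix.PosSemidef.one (n := Fin n) (R := ℝ)).conjTranspose_mul_mul_same T⁻¹
      rwa [hTinvH, mul_one] at this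
    have hQ : (1 + K * (T⁻¹ * T⁻¹) * K).PosDef := by
      refine Matrix.PosDef.add_posSemidef Matrix.PosDef.one ?_
      have := hTiTi.conjTranspose_mul_mul_same K
      rwa [hKps.isHermitian] at this
    have hXps : (K * (T⁻¹ * B * T⁻¹) * K).PosSemidef := by
      have h1 : (T⁻¹ * B * T⁻¹).PosSemidef := by
        have := hB.conjTranspose_mul_mul_same T⁻¹
        rwa [hTinvH] at this
      have := h1.conjTranspose_mul_mul_same K
      rwa [hKps.isHermitian] at this
    have hsum : (1 : Matrix (Fin n) (Fin n) ℝ) + C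
        = (1 + K * (T⁻¹ * T⁻¹) * K) + K * (T⁻¹ * B * T⁻¹) * K := by
      have hB' : T⁻¹ * B * T⁻¹ = 1 - T⁻¹ * T⁻¹ := by
        have : T⁻¹ * B * T⁻¹ = T⁻¹ * (T * T) * T⁻¹ - T⁻¹ * T⁻¹ := by
          rw [hTT]; noncomm_ring
        rw [this, ← Matrix.mul_assoc, Matrix.mul_assoc (T⁻¹ * T), hid2, hid1, one_mul]
      rw [hB', ← hKK]; noncomm_ring
    calc (1 + K * (T⁻¹ * T⁻¹) * K).det
        ≤ ((1 + K * (T⁻¹ * T⁻¹) * K) + K * (T⁻¹ * B * T⁻¹) * K).det :=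
          det_le_det_add hQ hXps
      _ = (1 + C).det := by rw [← hsum]
  have h1Bpos : 0 < (1 + B).det := h1B.det_pos
  nlinarith

theorem det_add_add_mul_det_le {n : ℕ} (A B C : Matrix (Fin n) (Fin n) ℝ)
    (hA : A.PosDef) (hB : B.PosDef) (hC : C.PosDef) :
    (A + B + C).det * A.det ≤ (A + B).det * (A + C).det := by
  set S := CFC.sqrt A with hSdef
  have hSps : S.PosSemidef := Matrix.nonneg_iff_posSemidef.mp (CFC.sqrt_nonneg _)
  have hSS : S * S = A := CFC.sqrt_mul_sqrt_self _ hA.posSemidef.nonneg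
  have hdetS : S.det * S.det = A.det := by rw [← det_mul, hSS]
  have hSu : IsUnit S.det := by
    refine isUnit_iff_ne_zero.mpr fun h => ?_
    have := hA.det_pos
    rw [← hdetS, h, mul_zero] at this
    exact lt_irrefl _ this
  have hid1 : S * S⁻¹ = 1 := mul_nonsing_inv _ hSu
  have hid2 : S⁻¹ * S = 1 := nonsing_inv_mul _ hSu
  have hSinvH : (S⁻¹)ᴴ = S⁻¹ := by
    rw [conjTranspose_nonsing_inv, hSps.isHermitian]
  have conjPSD : ∀ {X : Matrix (Fin n) (Fin n) ℝ}, X.PosSemidef →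
      (S⁻¹ * X * S⁻¹).PosSemidef := by
    intro X hX
    have := hX.conjTranspose_mul_mul_same S⁻¹
    rwa [hSinvH] at this
  have hconj : ∀ X : Matrix (Fin n) (Fin n) ℝ,
      A + X = S * (1 + S⁻¹ * X * S⁻¹) * S := by
    intro X
    have h : S * (1 + S⁻¹ * X * S⁻¹) * S
        = S * S + (S * S⁻¹) * X * (S⁻¹ * S) := by noncomm_ring
    rw [h, hid1, hid2, hSS, one_mul, mul_one]
  have hdet : ∀ X : Matrix (Fin n) (Fin n) ℝ,
      (A + X).det = A.det * (1 + S⁻¹ * X * S⁻¹).det := by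
    intro X
    rw [hconj X, det_mul, det_mul, ← hdetS]; ring
  set B' := S⁻¹ * B * S⁻¹ with hB'def
  set C' := S⁻¹ * C * S⁻¹ with hC'def
  have hBC' : S⁻¹ * (B + C) * S⁻¹ = B' + C' := by
    rw [hB'def, hC'def]; noncomm_ring
  have h1 : (A + B + C).det = A.det * (1 + (B' + C')).det := by
    rw [add_assoc, hdet (B + C), hBC']
  have h2 : (A + B).det = A.det * (1 + B').det := hdet B
  have h3 : (A + C).det = A.det * (1 + C').det := hdet C
  have hkey : (1 + (B' + C')).det ≤ (1 + B').det * (1 + C').det := by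
    have := det_one_add_add_le (conjPSD hB.posSemidef) (conjPSD hC.posSemidef)
    rwa [add_assoc] at this
  rw [h1, h2, h3]
  have hApos : 0 < A.det := hA.det_pos
  calc A.det * (1 + (B' + C')).det * A.det
      = (A.det * A.det) * (1 + (B' + C')).det := by ring
    _ ≤ (A.det * A.det) * ((1 + B').det * (1 + C').det) :=
        mul_le_mul_of_nonneg_left hkey (by positivity)
    _ = A.det * (1 + B').det * (A.det * (1 + C').det) := by ring
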